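/- Let X and Y be independent non-negative random variables with Y ∈ (0,1) almost surely, and suppose the survival function of X is rapidly varying at infinity (index −∞), i.e. P[X>cx]/P[X>x] → 0 for every c>1. Then P[XY>x]/P[X>x] → 0 as x → ∞. -/

import Mathlib

open MeasureTheory ProbabilityTheory Filter Set

theorem breiman_rapidly_varying
    {Ω : Type*} [MeasureSpace Ω] [IsProbabilityMeasure (ℙ : Measure Ω)]
    (X Y : Ω → ℝ) (hXm : Measurable X) (hYm : Measurable Y)
    (hX0 : ∀ᵐ ω ∂ℙ, 0 ≤ X ω) (hY01 : ∀ᵐ ω ∂ℙ, Y ω ∈ Set.Ioo (0:ℝ) 1)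
    (hInd : IndepFun X Y ℙ)
    (hSV : ∀ c > (1:ℝ), Tendsto
      (fun x => (ℙ {ω | c * x < X ω}).toReal / (ℙ {ω | x < X ω}).toReal)
      atTop (nhds 0)) :
    Tendsto (fun x => (ℙ {ω | x < X ω * Y ω}).toReal / (ℙ {ω | x < X ω}).toReal)
      atTop (nhds 0) := by
  -- P[Y ≥ 1] = 0
  have hY1 : ℙ {ω | (1:ℝ) ≤ Y ω} = 0 := by
    refine measure_mono_null ?_ (ae_iff.mp hY01)
    intro ω hω
    simp only [Set.mem_setOf_eq, Set.mem_Ioo] at *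
    intro h
    linarith [h.2]
  -- continuity from above for {Y ≥ 1 - 1/(n+1)}
  set s : ℕ → Set Ω := fun n => {ω | 1 - 1/(n+1 : ℝ) ≤ Y ω} with hs_def
  have hs_meas : ∀ n, NullMeasurableSet (s n) ℙ := fun n =>
    (hYm measurableSet_Ici).nullMeasurableSet
  have hs_anti : Antitone s := by
    intro n m hnm ω hω
    simp only [hs_def, Set.mem_setOf_eq] at *
    have h1 : (1:ℝ)/(m+1) ≤ 1/(n+1) := by
      apply one_div_le_one_div_of_le (by positivity)
      have hnm' : (n:ℝ) ≤ m := Nat.cast_le.mpr hnm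
      linarith
    linarith
  have hs_inter : (⋂ n, s n) = {ω | (1:ℝ) ≤ Y ω} := by
    ext ω
    simp only [Set.mem_iInter, hs_def, Set.mem_setOf_eq]
    constructor
    · intro h
      by_contra hlt
      push_neg at hlt
      obtain ⟨n, hn⟩ := exists_nat_one_div_lt (by linarith : (0:ℝ) < 1 - Y ω)
      have := h n
      push_cast at hn this
      linarith
    · intro h n
      have : (0:ℝ) < 1/(n+1) := by positivity
      linarith
  have htend : Tendsto (fun n => ℙ (s n)) atTop (nhds 0) := by
    have := tendsto_measure_iInter_atTop hs_meas hs_anti ⟨0, measure_ne_top ℙ _⟩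
    rwa [hs_inter, hY1] at this
  -- main argument
  rw [Metric.tendsto_atTop]
  intro ε hε
  -- choose n with P[s n] < ε/2 and n ≥ 1
  have h2 : Tendsto (fun n => (ℙ (s n)).toReal) atTop (nhds 0) := by
    exact (ENNReal.tendsto_toReal (by simp)).comp htend
  obtain ⟨N₀, hN₀⟩ := (Metric.tendsto_atTop.mp h2) (ε/2) (by linarith)
  set n := max N₀ 1 with hn_def
  have hBn : (ℙ (s n)).toReal < ε/2 := by
    have := hN₀ n (le_max_left _ _)
    rwa [Real.dist_eq, sub_zero, abs_of_nonneg ENNReal.toReal_nonneg] at this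
  set b : ℝ := 1 - 1/(n+1 : ℝ) with hb_def
  have hn1 : (1:ℕ) ≤ n := le_max_right _ _
  have hb0 : 0 < b := by
    have : (1:ℝ)/(n+1) ≤ 1/2 := by
      apply one_div_le_one_div_of_le (by norm_num)
      have : (1:ℝ) ≤ n := by exact_mod_cast hn1
      linarith
    simp only [hb_def]; linarith
  have hb1 : b < 1 := by
    have : (0:ℝ) < 1/(n+1) := by positivity
    simp only [hb_def]; linarith
  set c : ℝ := 1/b with hc_def
  have hc1 : 1 < c := by
    rw [hc_def, lt_div_iff₀ hb0, one_mul]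
    exact hb1
  obtain ⟨M, hM⟩ := (Metric.tendsto_atTop.mp (hSV c hc1)) (ε/2) (by linarith)
  refine ⟨max M 1, fun x hx => ?_⟩
  have hx1 : (1:ℝ) ≤ x := le_trans (le_max_right _ _) hx
  have hx0 : (0:ℝ) < x := by linarith
  -- key measure inequality
  have hkey : ℙ {ω | x < X ω * Y ω} ≤
      ℙ {ω | c * x < X ω} + ℙ {ω | x < X ω} * ℙ {ω | b ≤ Y ω} := by
    have hsub : ∀ᵐ ω ∂ℙ, ω ∈ {ω | x < X ω * Y ω} →
        ω ∈ ({ω | c * x < X ω} ∪ ({ω | x < X ω} ∩ {ω | b ≤ Y ω})) := by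
      filter_upwards [hX0, hY01] with ω hX hY hω
      have hω' : x < X ω * Y ω := hω
      rw [Set.mem_Ioo] at hY
      rw [Set.mem_union, Set.mem_inter_iff]
      simp only [Set.mem_setOf_eq]
      have hXpos : x < X ω := by
        have : X ω * Y ω ≤ X ω * 1 := by
          apply mul_le_mul_of_nonneg_left (le_of_lt hY.2) hX
        nlinarith
      by_cases hcase : c * x < X ω
      · exact Or.inl hcase
      · refine Or.inr ⟨hXpos, ?_⟩
        push_neg at hcase
        -- Y ω > x / X ω ≥ x / (c x) = 1/c = b
        have hX0' : 0 < X ω := lt_trans hx0 hXpos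
        have h1 : x / X ω < Y ω := (div_lt_iff₀ hX0').mpr (by linarith [mul_comm (X ω) (Y ω)])
        have h2 : x / (c * x) ≤ x / X ω := by
          apply div_le_div_of_nonneg_left (le_of_lt hx0) hX0' hcase
        have h3 : x / (c * x) = b := by
          rw [hc_def]
          field_simp
        exact le_of_lt (lt_of_le_of_lt (h3 ▸ h2) h1)
    calc ℙ {ω | x < X ω * Y ω}
        ≤ ℙ ({ω | c * x < X ω} ∪ ({ω | x < X ω} ∩ {ω | b ≤ Y ω})) := measure_mono_ae hsub
      _ ≤ ℙ {ω | c * x < X ω} + ℙ ({ω | x < X ω} ∩ {ω | b ≤ Y ω}) := measure_union_le _ _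
      _ = ℙ {ω | c * x < X ω} + ℙ {ω | x < X ω} * ℙ {ω | b ≤ Y ω} := by
          congr 1
          have := hInd.measure_inter_preimage_eq_mul (s := Set.Ioi x) (t := Set.Ici b)
            measurableSet_Ioi measurableSet_Ici
          exact this
  have hkey' : (ℙ {ω | x < X ω * Y ω}).toReal ≤
      (ℙ {ω | c * x < X ω}).toReal + (ℙ {ω | x < X ω}).toReal * (ℙ {ω | b ≤ Y ω}).toReal := by
    have hfin1 : ℙ {ω | c * x < X ω} ≠ ⊤ := measure_ne_top _ _
    have hfin2 : ℙ {ω | x < X ω} * ℙ {ω | b ≤ Y ω} ≠ ⊤ :=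
      ENNReal.mul_ne_top (measure_ne_top _ _) (measure_ne_top _ _)
    rw [← ENNReal.toReal_mul, ← ENNReal.toReal_add hfin1 hfin2]
    exact ENNReal.toReal_mono (ENNReal.add_ne_top.mpr ⟨hfin1, hfin2⟩) hkey
  set a := (ℙ {ω | x < X ω * Y ω}).toReal with ha
  set A := (ℙ {ω | c * x < X ω}).toReal with hA
  set D := (ℙ {ω | x < X ω}).toReal with hD
  set B := (ℙ {ω | b ≤ Y ω}).toReal with hB
  have hBsn : B = (ℙ (s n)).toReal := rfl
  have hBlt : B < ε/2 := by rw [hBsn]; exact hBn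
  rw [Real.dist_eq, sub_zero]
  rcases eq_or_lt_of_le (ENNReal.toReal_nonneg : 0 ≤ D) with hD0 | hD0
  · have hD0' : D = 0 := hD0.symm
    rw [hD0', div_zero, abs_zero]; exact hε
  · have hAD : A / D < ε/2 := by
      have := hM x (le_trans (le_max_left _ _) hx)
      rwa [Real.dist_eq, sub_zero, abs_of_nonneg
        (div_nonneg ENNReal.toReal_nonneg ENNReal.toReal_nonneg)] at this
    have h4 : a / D ≤ A / D + B := by
      have heq : A / D + B = (A + D * B) / D := by rw [add_div, mul_div_cancel_left₀ B (ne_of_gt hD0)]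
      rw [heq]
      exact (div_le_div_iff_of_pos_right hD0).mpr hkey'
    have hnn : 0 ≤ a / D := div_nonneg ENNReal.toReal_nonneg (le_of_lt hD0)
    rw [abs_of_nonneg hnn]
    linarith
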